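/- Let U ∈ {0,1}^{n×k} be a clustering matrix in which every column is nonzero, let C = U (U^T U)^{-1} U^T, let σ : ℝ → ℝ be any function applied entrywise, let W_l ∈ ℝ^{n×m}, W_{l+1} ∈ ℝ^{p×n}, and x ∈ ℝ^m. Then W_{l+1} σ(C W_l x) = (W_{l+1} C^T) σ((C W_l) x), so folding the outputs of layer l with C and compensating in layer l+1 by W_{l+1} C^T commutes with the elementwise nonlinearity. -/
import Mathlib


open Matrix

/-- If `U ∈ {0,1}^{n×k}` is a clustering matrix (every row has exactly
one entry equal to 1) with every column nonzero, `C = U (Uᵀ U)⁻¹ Uᵀ`, `σ : ℝ → ℝ` is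
applied entrywise, `W_l ∈ ℝ^{n×m}`, `W_{l+1} ∈ ℝ^{p×n}`, and `x ∈ ℝ^m`, then
`W_{l+1} σ(C W_l x) = (W_{l+1} Cᵀ) σ((C W_l) x)`. -/
theorem folding_next_layer_compensation
    (n k m p : ℕ) (U : Matrix (Fin n) (Fin k) ℝ)
    (hbin : ∀ i j, U i j = 0 ∨ U i j = 1)
    (hrow : ∀ i, ∃! j, U i j = 1)
    (hcol : ∀ j, ∃ i, U i j = 1)
    (σ : ℝ → ℝ)
    (Wl : Matrix (Fin n) (Fin m) ℝ) (Wl1 : Matrix (Fin p) (Fin n) ℝ)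
    (x : Fin m → ℝ) :
    Wl1 *ᵥ (fun i => σ (((U * (Uᵀ * U)⁻¹ * Uᵀ) *ᵥ (Wl *ᵥ x)) i))
      = (Wl1 * (U * (Uᵀ * U)⁻¹ * Uᵀ)ᵀ) *ᵥ
          (fun i => σ ((((U * (Uᵀ * U)⁻¹ * Uᵀ) * Wl) *ᵥ x) i)) := by
  classical
  choose c hc using hrow
  have hU : ∀ i j, U i j = if j = c i then 1 else 0 := by
    intro i j
    by_cases h : j = c i
    · simpa [h] using (hc i).1
    · rcases hbin i j with h0 | h1
      · simp [h, h0]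
      · exact absurd ((hc i).2 j h1) h
  set sR : Fin k → ℝ := fun j => ((Finset.univ.filter fun i => c i = j).card : ℝ) with hsR
  have hs : ∀ j, sR j ≠ 0 := by
    intro j
    obtain ⟨i, hi⟩ := hcol j
    have hj : j = c i := (hc i).2 j hi
    have : i ∈ Finset.univ.filter fun i => c i = j := by simp [hj]
    have hcard : 0 < (Finset.univ.filter fun i => c i = j).card :=
      Finset.card_pos.mpr ⟨i, this⟩
    simp only [hsR]
    exact_mod_cast hcard.ne'
  have hUtU : Uᵀ * U = diagonal sR := by
    ext a b
    simp only [mul_apply, transpose_apply, diagonal_apply, hU]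
    by_cases h : a = b
    · subst h
      rw [if_pos rfl]
      have : ∀ i : Fin n, (if a = c i then (1:ℝ) else 0) * (if a = c i then 1 else 0)
          = if c i = a then (1:ℝ) else 0 := by
        intro i; by_cases h' : a = c i <;> simp [h', eq_comm]
      rw [Finset.sum_congr rfl fun i _ => this i]
      simp [hsR, Finset.sum_boole]
    · rw [if_neg h]
      apply Finset.sum_eq_zero
      intro i _
      by_cases ha : a = c i
      · have hb : b ≠ c i := fun hb => h (ha.trans hb.symm)
        simp [ha, hb]
      · simp [ha]
  set C : Matrix (Fin n) (Fin n) ℝ := U * (Uᵀ * U)⁻¹ * Uᵀ with hCdef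
  have hinv : (Uᵀ * U)⁻¹ = diagonal fun j => (sR j)⁻¹ := by
    have hu1 : sR * (fun j => (sR j)⁻¹) = 1 := by
      funext j
      simp [mul_inv_cancel₀ (hs j)]
    have hu2 : (fun j => (sR j)⁻¹) * sR = 1 := by
      funext j
      simp [inv_mul_cancel₀ (hs j)]
    have hru : Ring.inverse sR = fun j => (sR j)⁻¹ :=
      Ring.inverse_unit (⟨sR, fun j => (sR j)⁻¹, hu1, hu2⟩ : Units (Fin k → ℝ))
    rw [hUtU, Matrix.inv_diagonal, hru]
  have hC : ∀ i j, C i j = if c i = c j then (sR (c i))⁻¹ else 0 := by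
    intro i j
    have h1 : C i j = ∑ a, U i a * (sR a)⁻¹ * U j a := by
      simp [hCdef, hinv, mul_apply, transpose_apply, diagonal_apply, mul_ite,
        mul_zero, Finset.sum_ite_eq', Finset.mul_sum, Finset.sum_mul]
    rw [h1]
    have h2 : ∀ a : Fin k, U i a * (sR a)⁻¹ * U j a
        = if a = c i then (if a = c j then (sR a)⁻¹ else 0) else 0 := by
      intro a
      by_cases ha : a = c i
      · by_cases hb : a = c j <;> simp [hU, ha, hb]
      · simp [hU, ha]
    rw [Finset.sum_congr rfl fun a _ => h2 a, Finset.sum_ite_eq' Finset.univ (c i)]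
    simp
  set y : Fin n → ℝ := Wl *ᵥ x with hy
  have hconst : ∀ i j, c i = c j → (C *ᵥ y) i = (C *ᵥ y) j := by
    intro i j hij
    simp only [mulVec, dotProduct, hC, hij]
  set w : Fin n → ℝ := fun i => σ ((C *ᵥ y) i) with hw
  have hfix : Cᵀ *ᵥ w = w := by
    funext i
    have h1 : (Cᵀ *ᵥ w) i = ∑ j, (if c j = c i then (sR (c i))⁻¹ * w i else 0) := by
      simp only [mulVec, dotProduct, transpose_apply, hC]
      refine Finset.sum_congr rfl fun j _ => ?_
      by_cases h : c j = c i
      · have hwj : w j = w i := by simp only [hw]; rw [hconst j i h]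
        simp [h, hwj]
      · simp [h]
    rw [h1, ← Finset.sum_filter, Finset.sum_const, nsmul_eq_mul]
    have : ((Finset.univ.filter fun j => c j = c i).card : ℝ) = sR (c i) := rfl
    rw [this, ← mul_assoc, mul_inv_cancel₀ (hs (c i)), one_mul]
  have key : Wl1 *ᵥ w = (Wl1 * Cᵀ) *ᵥ w := by
    rw [← Matrix.mulVec_mulVec, hfix]
  have hcw : (fun i => σ (((C * Wl) *ᵥ x) i)) = w := by
    funext i
    rw [← Matrix.mulVec_mulVec, ← hy]
  calc Wl1 *ᵥ w = (Wl1 * Cᵀ) *ᵥ w := key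
    _ = (Wl1 * Cᵀ) *ᵥ (fun i => σ (((C * Wl) *ᵥ x) i)) := by rw [hcw]
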